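/- arXiv:2309.14522 — 2 statements merged into one kernel-verified Lean document; each statement's English description precedes it below -/
import Mathlib

section
/- Let n ≥ 1 and let v_1, …, v_n ∈ ℂ be indexed cyclically (v_0 := v_n, v_{n+1} := v_1) with v_j ≠ v_{j−1} for every j = 1, …, n. Let z_1 ∈ ℂ be arbitrary and define z_2, …, z_n inductively by z_{j+1} = R_{v_j, v_{j+1}}(R_{v_{j−1}, v_j}(z_j)) for j = 1, …, n−1, i.e. z_{j+1} is obtained from z_j by the reflection across the line through v_{j−1} and v_j followed by the reflection across the line through v_j and v_{j+1}. Then Σ_{j=1}^{n} conj(z_j)·(v_j − v_{j−1}) = Σ_{j=1}^{n} (conj(v_{j−1})·v_j − v_{j−1}·conj(v_j)); in particular, when v_1, …, v_n are the vertices of a convex polygon w listed counterclockwise, the sum equals 4i·Area(w). -/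
/-- Reflection of `z` across the line through the (distinct) points `a` and `b` in `ℂ`:
`R_{a,b}(z) = a + ((b−a)/(conj b − conj a))·(conj z − conj a)`. -/
noncomputable def lineReflection (a b z : ℂ) : ℂ :=
  a + ((b - a) / ((starRingEnd ℂ) b - (starRingEnd ℂ) a)) * ((starRingEnd ℂ) z - (starRingEnd ℂ) a)

private lemma conj_sub_ne_zero' {a b : ℂ} (h : a ≠ b) :
    (starRingEnd ℂ) a - (starRingEnd ℂ) b ≠ 0 := by
  intro hc
  exact h ((starRingEnd ℂ).injective (sub_eq_zero.mp hc))

private lemma key_step (a b c zz : ℂ) (hab : b ≠ a) (hbc : c ≠ b) :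
    ((starRingEnd ℂ) (lineReflection b c (lineReflection a b zz)) * (c - b)
        - ((starRingEnd ℂ) b * c - b * (starRingEnd ℂ) c))
      * ((starRingEnd ℂ) b - (starRingEnd ℂ) a)
    = ((starRingEnd ℂ) zz * (b - a) - ((starRingEnd ℂ) a * b - a * (starRingEnd ℂ) b))
      * ((starRingEnd ℂ) c - (starRingEnd ℂ) b) := by
  have h1 : (starRingEnd ℂ) b - (starRingEnd ℂ) a ≠ 0 := conj_sub_ne_zero' hab
  have h2 : (starRingEnd ℂ) c - (starRingEnd ℂ) b ≠ 0 := conj_sub_ne_zero' hbc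
  have h3 : b - a ≠ 0 := sub_ne_zero.mpr hab
  have h4 : c - b ≠ 0 := sub_ne_zero.mpr hbc
  simp only [lineReflection, map_add, map_mul, map_sub, map_div₀, Complex.conj_conj]
  field_simp
  ring

/-- Let `v_1, …, v_n ∈ ℂ` be indexed cyclically with consecutive points distinct, let `z_1` be
arbitrary and define `z_{j+1}` from `z_j` by reflecting across the line through `v_{j−1}, v_j`
and then across the line through `v_j, v_{j+1}` (for `j = 1, …, n−1`).  Then
`Σ_j conj(z_j)·(v_j − v_{j−1}) = Σ_j (conj(v_{j−1})·v_j − v_{j−1}·conj(v_j))`,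
which is `4i` times the signed area enclosed by the polygon `v_1 v_2 … v_n`. -/
theorem sum_conj_mul_edge_of_double_reflections
    (n : ℕ) [NeZero n] (v z : Fin n → ℂ)
    (hv : ∀ j : Fin n, v j ≠ v (j - 1))
    (hz : ∀ j : Fin n, (j : ℕ) + 1 < n →
      z (j + 1) = lineReflection (v j) (v (j + 1)) (lineReflection (v (j - 1)) (v j) (z j))) :
    ∑ j : Fin n, (starRingEnd ℂ) (z j) * (v j - v (j - 1)) =
      ∑ j : Fin n, ((starRingEnd ℂ) (v (j - 1)) * v j - v (j - 1) * (starRingEnd ℂ) (v j)) := by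
  set C := starRingEnd ℂ
  -- the "deviation" and the "edge conjugate difference"
  set S : Fin n → ℂ := fun j => C (z j) * (v j - v (j - 1)) - (C (v (j - 1)) * v j - v (j - 1) * C (v j)) with hS
  set d : Fin n → ℂ := fun j => C (v j) - C (v (j - 1)) with hd
  have hd0 : ∀ j, d j ≠ 0 := fun j => conj_sub_ne_zero' (hv j)
  set K : ℂ := S 0 / d 0 with hK
  -- S j = K * d j, by induction
  have main : ∀ k : ℕ, ∀ hk : k < n, S ⟨k, hk⟩ = K * d ⟨k, hk⟩ := by
    intro k
    induction k with
    | zero =>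
      intro hk
      have : (⟨0, hk⟩ : Fin n) = 0 := rfl
      rw [this, hK, div_mul_cancel₀ _ (hd0 0)]
    | succ m ih =>
      intro hk
      have hm : m < n := Nat.lt_of_succ_lt hk
      set j : Fin n := ⟨m, hm⟩ with hj
      have hjn : (j : ℕ) + 1 < n := hk
      have hsucc : (⟨m + 1, hk⟩ : Fin n) = j + 1 := by
        apply Fin.ext
        simp [Fin.add_def, Nat.mod_eq_of_lt hk, hj]
      have hpred : (j + 1) - 1 = j := add_sub_cancel_right j 1
      have hzj := hz j hjn
      have hab : v j ≠ v (j - 1) := hv j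
      have hbc : v (j + 1) ≠ v j := by
        have := hv (j + 1)
        rwa [hpred] at this
      have hkey := key_step (v (j - 1)) (v j) (v (j + 1)) (z j) hab hbc
      rw [← hzj] at hkey
      have hSj := ih hm
      rw [hsucc]
      have hexp : S (j + 1) * d j = S j * d (j + 1) := by
        simp only [hS, hd, hpred]
        exact hkey
      rw [hSj] at hexp
      have : S (j + 1) * d j = K * d (j + 1) * d j := by
        rw [hexp]; ring
      exact mul_right_cancel₀ (hd0 j) this
  have hSK : ∀ j : Fin n, S j = K * d j := fun j => by
    have := main j.1 j.2
    simpa using this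
  -- cyclic sum of d is zero
  have hdsum : ∑ j : Fin n, d j = 0 := by
    have : ∑ j : Fin n, C (v (j - 1)) = ∑ j : Fin n, C (v j) :=
      Fintype.sum_equiv (Equiv.subRight (1 : Fin n)) _ _ (fun x => rfl)
    simp only [hd, Finset.sum_sub_distrib, this, sub_self]
  have : ∑ j : Fin n, S j = 0 := by
    calc ∑ j : Fin n, S j = ∑ j : Fin n, K * d j := Finset.sum_congr rfl (fun j _ => hSK j)
    _ = K * ∑ j : Fin n, d j := by rw [Finset.mul_sum]
    _ = 0 := by rw [hdsum, mul_zero]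
  have := sub_eq_zero.mp (by rwa [hS, Finset.sum_sub_distrib] at this)
  exact this
end

section
/- Let g ≥ 1 and let V be a 2g-dimensional vector space over ℤ/2ℤ equipped with a nondegenerate alternating bilinear form B; let Q₊ and Q₋ denote the (finite) sets of even and odd quadratic forms on (V, B), respectively. Then for every v ∈ V one has Σ_{q ∈ Q₊} (−1)^{q(v)} − Σ_{q ∈ Q₋} (−1)^{q(v)} = 2^g, where the sums are taken in ℤ. -/
open scoped Classical

/-- The sign `(−1)^c ∈ ℤ` attached to `c ∈ ℤ/2ℤ`: `1` if `c = 0` and `−1` if `c = 1`. -/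
def zmod2Sign (c : ZMod 2) : ℤ := if c = 0 then 1 else -1

/-- A quadratic form on a `ℤ/2ℤ`-vector space `V` relative to a bilinear form `B`:
a function `q : V → ℤ/2ℤ` with `q(u+v) = q(u) + q(v) + B(u,v)`. -/
def IsQuadraticFormZMod2 {V : Type*} [AddCommGroup V] [Module (ZMod 2) V]
    (B : V →ₗ[ZMod 2] V →ₗ[ZMod 2] ZMod 2) (q : V → ZMod 2) : Prop :=
  ∀ x y : V, q (x + y) = q x + q y + B x y

/-- A function `q : V → ℤ/2ℤ` is even if `#{v : q v = 0} > #{v : q v = 1}`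
(equivalently, its Arf invariant is `0`); it is odd otherwise. -/
def IsEvenQF {V : Type*} [Fintype V] (q : V → ZMod 2) : Prop :=
  (Finset.univ.filter fun x : V => q x = 1).card <
    (Finset.univ.filter fun x : V => q x = 0).card

section Aux
set_option linter.unusedSectionVars false

lemma zmod2Sign_add (a b : ZMod 2) :
    zmod2Sign (a + b) = zmod2Sign a * zmod2Sign b := by
  fin_cases a <;> fin_cases b <;> rfl

lemma zmod2_eq_one_of_ne_zero {a : ZMod 2} (h : a ≠ 0) : a = 1 := by
  revert h; revert a; decide

variable {V : Type*} [AddCommGroup V] [Module (ZMod 2) V] [Fintype V] [DecidableEq V]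
variable (B : V →ₗ[ZMod 2] V →ₗ[ZMod 2] ZMod 2)

/-- The total Gauss-type sum of a `ZMod 2`-valued function. -/
noncomputable def Wsum (q : V → ZMod 2) : ℤ := ∑ x, zmod2Sign (q x)

lemma sum_sign_shift (q : V → ZMod 2) (w : V) :
    ∑ x, zmod2Sign (q (x + w)) = ∑ x, zmod2Sign (q x) :=
  Fintype.sum_equiv (Equiv.addRight w) _ _ (fun _ => rfl)

lemma bsymm (halt : ∀ x : V, B x x = 0) (x y : V) : B x y = B y x := by
  have h := halt (x + y)
  simp only [map_add, LinearMap.add_apply, halt x, halt y, zero_add, add_zero] at h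
  have h2 : B x y + B x y = 0 := CharTwo.add_self_eq_zero _
  linear_combination h2 - h

lemma q_zero {q : V → ZMod 2} (hq : IsQuadraticFormZMod2 B q) : q 0 = 0 := by
  have h := hq 0 0
  simp only [add_zero, map_zero, LinearMap.zero_apply] at h
  have h2 : q 0 + q 0 = 0 := CharTwo.add_self_eq_zero _
  rw [h2] at h
  exact h

lemma char_sum (halt : ∀ x : V, B x x = 0)
    (hnd : ∀ x : V, (∀ y : V, B x y = 0) → x = 0)
    {z : V} (hz : z ≠ 0) : ∑ x, zmod2Sign (B x z) = 0 := by
  obtain ⟨x0, hx0⟩ : ∃ x0, B z x0 = 1 := by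
    by_contra h
    push_neg at h
    exact hz (hnd z fun y => by
      by_contra h2
      exact h y (zmod2_eq_one_of_ne_zero h2))
  have hx0' : B x0 z = 1 := by rw [bsymm B halt]; exact hx0
  have hshift := sum_sign_shift (fun x => B x z) x0
  have : ∀ x : V, zmod2Sign (B (x + x0) z) = - zmod2Sign (B x z) := by
    intro x
    simp only [map_add, LinearMap.add_apply, hx0', zmod2Sign_add]
    have : zmod2Sign 1 = -1 := rfl
    rw [this]; ring
  rw [Finset.sum_congr rfl (fun x _ => this x), Finset.sum_neg_distrib] at hshift
  linarith


lemma Wsum_eq_counts (q : V → ZMod 2) :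
    Wsum q = ((Finset.univ.filter fun x : V => q x = 0).card : ℤ) -
      ((Finset.univ.filter fun x : V => q x = 1).card : ℤ) := by
  unfold Wsum
  rw [← Finset.sum_filter_add_sum_filter_not Finset.univ (fun x => q x = 0)]
  have h1 : ∀ x ∈ Finset.univ.filter (fun x : V => q x = 0), zmod2Sign (q x) = 1 := by
    intro x hx
    simp only [Finset.mem_filter] at hx
    simp [zmod2Sign, hx.2]
  have h2 : ∀ x ∈ Finset.univ.filter (fun x : V => ¬ q x = 0), zmod2Sign (q x) = -1 := by
    intro x hx
    simp only [Finset.mem_filter] at hx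
    simp [zmod2Sign, hx.2]
  rw [Finset.sum_congr rfl h1, Finset.sum_congr rfl h2]
  have h3 : Finset.univ.filter (fun x : V => ¬ q x = 0) =
      Finset.univ.filter (fun x : V => q x = 1) := by
    apply Finset.filter_congr
    intro x _
    constructor
    · exact fun h => zmod2_eq_one_of_ne_zero h
    · intro h; rw [h]; decide
  rw [h3]
  simp [mul_comm]
  ring

lemma quad_translate {q : V → ZMod 2} (hq : IsQuadraticFormZMod2 B q) (w : V) :
    IsQuadraticFormZMod2 B (fun x => q x + B w x) := by
  intro x y
  simp only [hq x y, map_add]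
  ring

lemma Wsum_translate {q : V → ZMod 2} (hq : IsQuadraticFormZMod2 B q)
    (halt : ∀ x : V, B x x = 0) (w : V) :
    Wsum (fun x => q x + B w x) = zmod2Sign (q w) * Wsum q := by
  unfold Wsum
  rw [← sum_sign_shift (fun x => q x + B w x) w, Finset.mul_sum]
  apply Finset.sum_congr rfl
  intro x _
  have key : q (x + w) + B w (x + w) = q w + q x := by
    rw [hq x w]
    simp only [map_add]
    rw [bsymm B halt x w, halt w]
    have h2 : B w x + B w x = 0 := CharTwo.add_self_eq_zero _
    linear_combination h2
  rw [key, zmod2Sign_add]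

lemma gauss_sum {q : V → ZMod 2} (hq : IsQuadraticFormZMod2 B q)
    (halt : ∀ x : V, B x x = 0)
    (hnd : ∀ x : V, (∀ y : V, B x y = 0) → x = 0) :
    Wsum q * Wsum q = (Fintype.card V : ℤ) := by
  unfold Wsum
  rw [Finset.sum_mul_sum]
  have step1 : ∀ x : V, ∑ y : V, zmod2Sign (q x) * zmod2Sign (q y) =
      ∑ z : V, zmod2Sign (q z) * zmod2Sign (B x z) := by
    intro x
    have reindex : ∑ y : V, zmod2Sign (q x) * zmod2Sign (q y) =
        ∑ z : V, zmod2Sign (q x) * zmod2Sign (q (x + z)) :=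
      (Fintype.sum_equiv (Equiv.addLeft x) _ _ (fun z => rfl)).symm
    rw [reindex]
    apply Finset.sum_congr rfl
    intro z _
    rw [← zmod2Sign_add, ← zmod2Sign_add]
    congr 1
    rw [hq x z]
    have h2 : q x + q x = 0 := CharTwo.add_self_eq_zero _
    linear_combination h2
  rw [Finset.sum_congr rfl (fun x _ => step1 x), Finset.sum_comm]
  have step2 : ∀ z : V, ∑ x : V, zmod2Sign (q z) * zmod2Sign (B x z) =
      zmod2Sign (q z) * ∑ x : V, zmod2Sign (B x z) := by
    intro z; rw [Finset.mul_sum]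
  rw [Finset.sum_congr rfl (fun z _ => step2 z)]
  rw [Finset.sum_eq_single 0]
  · rw [q_zero B hq]
    simp only [map_zero]
    simp [zmod2Sign, Finset.card_univ]
  · intro z _ hz
    rw [char_sum B halt hnd hz, mul_zero]
  · simp

lemma Wsum_eq_sign {g : ℕ} {q : V → ZMod 2} (hq : IsQuadraticFormZMod2 B q)
    (halt : ∀ x : V, B x x = 0)
    (hnd : ∀ x : V, (∀ y : V, B x y = 0) → x = 0)
    (hdim : Module.finrank (ZMod 2) V = 2 * g) :
    Wsum q = (if IsEvenQF q then 1 else -1) * 2 ^ g := by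
  have hcard : (Fintype.card V : ℤ) = 2 ^ g * 2 ^ g := by
    have h := Module.card_eq_pow_finrank (K := ZMod 2) (V := V)
    rw [ZMod.card, hdim] at h
    rw [h]
    push_cast
    rw [← pow_add]
    ring_nf
  have hsq : Wsum q * Wsum q = 2 ^ g * 2 ^ g := by
    rw [gauss_sum B hq halt hnd, hcard]
  have hor : Wsum q = 2 ^ g ∨ Wsum q = -(2 ^ g) := by
    rcases mul_self_eq_mul_self_iff.mp hsq with h | h
    · exact Or.inl h
    · exact Or.inr h
  have hcounts := Wsum_eq_counts (V := V) q
  have h2g : (0 : ℤ) < 2 ^ g := by positivity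
  rcases hor with h | h
  · have heven : IsEvenQF q := by
      unfold IsEvenQF
      have : ((Finset.univ.filter fun x : V => q x = 1).card : ℤ) <
          ((Finset.univ.filter fun x : V => q x = 0).card : ℤ) := by
        rw [h] at hcounts; linarith
      exact_mod_cast this
    rw [if_pos heven, one_mul, h]
  · have hodd : ¬ IsEvenQF q := by
      unfold IsEvenQF
      push_neg
      have : ((Finset.univ.filter fun x : V => q x = 0).card : ℤ) ≤
          ((Finset.univ.filter fun x : V => q x = 1).card : ℤ) := by
        rw [h] at hcounts; linarith
      exact_mod_cast this
    rw [if_neg hodd, neg_one_mul, h]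

lemma B_expand (n : ℕ) (b : Module.Basis (Fin n) (ZMod 2) V) (x y : V) :
    B x y = ∑ i, ∑ j, b.repr x i * b.repr y j * B (b i) (b j) := by
  conv_lhs => rw [← b.sum_repr x, ← b.sum_repr y]
  simp only [map_sum, map_smul, LinearMap.sum_apply, LinearMap.smul_apply, smul_eq_mul,
    Finset.mul_sum]
  rw [Finset.sum_comm]
  exact Finset.sum_congr rfl fun i _ => Finset.sum_congr rfl fun j _ => by ring

lemma exists_qf (halt : ∀ x : V, B x x = 0) :
    ∃ q : V → ZMod 2, IsQuadraticFormZMod2 B q := by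
  have hfin : Module.Finite (ZMod 2) V := Module.Finite.of_finite
  set n := Module.finrank (ZMod 2) V with hn
  let b : Module.Basis (Fin n) (ZMod 2) V := Module.finBasis (ZMod 2) V
  have hsymm := bsymm B halt
  refine ⟨fun x => ∑ p ∈ Finset.univ.filter (fun p : Fin n × Fin n => p.1 < p.2),
    b.repr x p.1 * b.repr x p.2 * B (b p.1) (b p.2), ?_⟩
  intro x y
  dsimp only
  have hrepr : ∀ i, b.repr (x + y) i = b.repr x i + b.repr y i := by
    intro i; rw [map_add]; rfl
  -- expand each term
  have hterm : ∀ p : Fin n × Fin n,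
      b.repr (x+y) p.1 * b.repr (x+y) p.2 * B (b p.1) (b p.2) =
      b.repr x p.1 * b.repr x p.2 * B (b p.1) (b p.2) +
      b.repr y p.1 * b.repr y p.2 * B (b p.1) (b p.2) +
      (b.repr x p.1 * b.repr y p.2 * B (b p.1) (b p.2) +
       b.repr x p.2 * b.repr y p.1 * B (b p.1) (b p.2)) := by
    intro p
    rw [hrepr, hrepr]
    ring
  rw [Finset.sum_congr rfl (fun p _ => hterm p), Finset.sum_add_distrib,
    Finset.sum_add_distrib]
  congr 1
  -- remains: cross terms sum equals B x y
  set f : Fin n × Fin n → ZMod 2 :=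
    fun p => b.repr x p.1 * b.repr y p.2 * B (b p.1) (b p.2) with hf
  have hcross : ∀ p : Fin n × Fin n,
      b.repr x p.1 * b.repr y p.2 * B (b p.1) (b p.2) +
      b.repr x p.2 * b.repr y p.1 * B (b p.1) (b p.2) = f p + f p.swap := by
    intro p
    simp only [hf, Prod.fst_swap, Prod.snd_swap]
    rw [hsymm (b p.2) (b p.1)]
  rw [Finset.sum_congr rfl (fun p _ => hcross p), Finset.sum_add_distrib]
  -- second sum over swap equals sum over > filter
  have hswap : ∑ p ∈ Finset.univ.filter (fun p : Fin n × Fin n => p.1 < p.2), f p.swap =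
      ∑ p ∈ Finset.univ.filter (fun p : Fin n × Fin n => p.2 < p.1), f p := by
    apply Finset.sum_nbij' (i := Prod.swap) (j := Prod.swap)
    · intro p hp; simp only [Finset.mem_filter, Finset.mem_univ, true_and] at hp ⊢
      simpa using hp
    · intro p hp; simp only [Finset.mem_filter, Finset.mem_univ, true_and] at hp ⊢
      simpa using hp
    · intro p _; simp
    · intro p _; simp
    · intro p _; rfl
  rw [hswap]
  -- total
  have htot : ∑ p : Fin n × Fin n, f p =
      (∑ p ∈ Finset.univ.filter (fun p : Fin n × Fin n => p.1 < p.2), f p) +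
      (∑ p ∈ Finset.univ.filter (fun p : Fin n × Fin n => p.2 < p.1), f p) := by
    rw [← Finset.sum_filter_add_sum_filter_not Finset.univ
      (fun p : Fin n × Fin n => p.1 < p.2) f]
    congr 1
    rw [← Finset.sum_filter_add_sum_filter_not
      (Finset.univ.filter (fun p : Fin n × Fin n => ¬ p.1 < p.2))
      (fun p : Fin n × Fin n => p.2 < p.1) f]
    have e1 : (Finset.univ.filter (fun p : Fin n × Fin n => ¬ p.1 < p.2)).filter
        (fun p => p.2 < p.1) =
        Finset.univ.filter (fun p : Fin n × Fin n => p.2 < p.1) := by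
      rw [Finset.filter_filter]
      apply Finset.filter_congr
      intro p _
      constructor
      · exact fun h => h.2
      · exact fun h => ⟨fun h2 => absurd h (not_lt.mpr h2.le), h⟩
    have e2 : ∑ p ∈ (Finset.univ.filter (fun p : Fin n × Fin n => ¬ p.1 < p.2)).filter
        (fun p => ¬ p.2 < p.1), f p = 0 := by
      apply Finset.sum_eq_zero
      intro p hp
      simp only [Finset.mem_filter, Finset.mem_univ, true_and, not_lt] at hp
      have hpe : p.1 = p.2 := le_antisymm hp.2 hp.1
      simp only [hf, hpe, halt, mul_zero]
    rw [e1, e2, add_zero]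
  have hBxy : B x y = ∑ p : Fin n × Fin n, f p := by
    rw [B_expand B n b x y, Fintype.sum_prod_type]
  rw [hBxy, htot]

lemma qf_param (halt : ∀ x : V, B x x = 0)
    (hnd : ∀ x : V, (∀ y : V, B x y = 0) → x = 0)
    {q0 q : V → ZMod 2} (h0 : IsQuadraticFormZMod2 B q0) (h : IsQuadraticFormZMod2 B q) :
    ∃ w : V, ∀ x, q x = q0 x + B w x := by
  have hfin : Module.Finite (ZMod 2) V := Module.Finite.of_finite
  set l : V → ZMod 2 := fun x => q x + q0 x with hl
  have hadd : ∀ x y, l (x + y) = l x + l y := by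
    intro x y
    simp only [hl, h x y, h0 x y]
    have h2 : B x y + B x y = 0 := CharTwo.add_self_eq_zero _
    linear_combination h2
  have hzero : l 0 = 0 := by
    simp only [hl, q_zero B h, q_zero B h0, add_zero]
  have hcase : ∀ c : ZMod 2, c = 0 ∨ c = 1 := by decide
  let L : V →ₗ[ZMod 2] ZMod 2 :=
    { toFun := l
      map_add' := hadd
      map_smul' := by
        intro c x
        rcases hcase c with rfl | rfl
        · simp [hzero]
        · simp }
  have hinj : Function.Injective B := by
    intro a b hab
    have : a - b = 0 := by
      apply hnd
      intro y
      have : B a y = B b y := by rw [hab]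
      simp only [map_sub, LinearMap.sub_apply, this, sub_self]
    exact sub_eq_zero.mp this
  have hrank : Module.finrank (ZMod 2) V =
      Module.finrank (ZMod 2) (V →ₗ[ZMod 2] ZMod 2) :=
    (Subspace.dual_finrank_eq (K := ZMod 2) (V := V)).symm
  have hsurj : Function.Surjective B :=
    (LinearMap.injective_iff_surjective_of_finrank_eq_finrank hrank).mp hinj
  obtain ⟨w, hw⟩ := hsurj L
  refine ⟨w, fun x => ?_⟩
  have hx : B w x = q x + q0 x := by rw [hw]; rfl
  rw [hx]
  have h2 : q0 x + q0 x = 0 := CharTwo.add_self_eq_zero _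
  linear_combination -h2

end Aux

/-- Let `g ≥ 1` and let `V` be a `2g`-dimensional vector space over `ℤ/2ℤ` with a
nondegenerate alternating bilinear form `B`; let `Q₊` and `Q₋` be the sets of even
and odd quadratic forms on `(V, B)`.  Then for every `v ∈ V`,
`Σ_{q ∈ Q₊} (−1)^{q(v)} − Σ_{q ∈ Q₋} (−1)^{q(v)} = 2^g`. -/
theorem sum_even_sub_sum_odd_quadratic_forms
    (g : ℕ) (hg : 1 ≤ g)
    (V : Type*) [AddCommGroup V] [Module (ZMod 2) V] [Fintype V] [DecidableEq V]
    (B : V →ₗ[ZMod 2] V →ₗ[ZMod 2] ZMod 2)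
    (hdim : Module.finrank (ZMod 2) V = 2 * g)
    (halt : ∀ x : V, B x x = 0)
    (hnd : ∀ x : V, (∀ y : V, B x y = 0) → x = 0)
    (v : V) :
    (∑ q ∈ Finset.univ.filter
        (fun q : V → ZMod 2 => IsQuadraticFormZMod2 B q ∧ IsEvenQF q), zmod2Sign (q v)) -
      (∑ q ∈ Finset.univ.filter
        (fun q : V → ZMod 2 => IsQuadraticFormZMod2 B q ∧ ¬IsEvenQF q), zmod2Sign (q v)) =
      (2 : ℤ) ^ g := by
  classical
  obtain ⟨q0, hq0⟩ := exists_qf B halt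
  have h2g : (2 : ℤ) ^ g ≠ 0 := by positivity
  have hsgn : ∀ c : ZMod 2, zmod2Sign c * zmod2Sign c = 1 := by decide
  set e0 : ℤ := if IsEvenQF q0 then 1 else -1 with he0
  have he0sq : e0 * e0 = 1 := by rw [he0]; split_ifs <;> ring
  set F : (V → ZMod 2) → ℤ :=
    fun q => (if IsEvenQF q then (1 : ℤ) else -1) * zmod2Sign (q v) with hF
  set Q : Finset (V → ZMod 2) :=
    Finset.univ.filter (fun q : V → ZMod 2 => IsQuadraticFormZMod2 B q) with hQ
  -- Step A : the LHS equals the signed sum of F over all quadratic forms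
  have stepA :
      (∑ q ∈ Finset.univ.filter
          (fun q : V → ZMod 2 => IsQuadraticFormZMod2 B q ∧ IsEvenQF q), zmod2Sign (q v)) -
        (∑ q ∈ Finset.univ.filter
          (fun q : V → ZMod 2 => IsQuadraticFormZMod2 B q ∧ ¬IsEvenQF q), zmod2Sign (q v)) =
      ∑ q ∈ Q, F q := by
    rw [← Finset.sum_filter_add_sum_filter_not Q IsEvenQF F]
    have hset1 : Q.filter IsEvenQF =
        Finset.univ.filter (fun q : V → ZMod 2 => IsQuadraticFormZMod2 B q ∧ IsEvenQF q) := by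
      rw [hQ, Finset.filter_filter]
    have hset2 : Q.filter (fun q => ¬ IsEvenQF q) =
        Finset.univ.filter (fun q : V → ZMod 2 => IsQuadraticFormZMod2 B q ∧ ¬IsEvenQF q) := by
      rw [hQ, Finset.filter_filter]
    rw [hset1, hset2]
    have e1 : ∀ q ∈ Finset.univ.filter
        (fun q : V → ZMod 2 => IsQuadraticFormZMod2 B q ∧ IsEvenQF q),
        F q = zmod2Sign (q v) := by
      intro q hqm
      simp only [Finset.mem_filter] at hqm
      rw [hF]
      simp only [if_pos hqm.2.2, one_mul]
    have e2 : ∀ q ∈ Finset.univ.filter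
        (fun q : V → ZMod 2 => IsQuadraticFormZMod2 B q ∧ ¬IsEvenQF q),
        F q = -zmod2Sign (q v) := by
      intro q hqm
      simp only [Finset.mem_filter] at hqm
      rw [hF]
      simp only [if_neg hqm.2.2, neg_one_mul]
    rw [Finset.sum_congr rfl e1, Finset.sum_congr rfl e2, Finset.sum_neg_distrib]
    ring
  rw [stepA]
  -- Step B : reindex the sum over quadratic forms by V
  have stepB : ∑ q ∈ Q, F q = ∑ w : V, F (fun x => q0 x + B w x) := by
    refine (Finset.sum_bij (i := fun (w : V) (_ : w ∈ Finset.univ) => fun x => q0 x + B w x)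
      ?_ ?_ ?_ ?_).symm
    · intro w _
      rw [hQ]
      simp only [Finset.mem_filter, Finset.mem_univ, true_and]
      exact quad_translate B hq0 w
    · intro w1 _ w2 _ hw
      have hBw : ∀ x, B w1 x = B w2 x := by
        intro x
        have := congrFun hw x
        exact add_left_cancel this
      have : w1 - w2 = 0 := by
        apply hnd
        intro y
        simp only [map_sub, LinearMap.sub_apply, hBw y, sub_self]
      exact sub_eq_zero.mp this
    · intro q hqm
      rw [hQ] at hqm
      simp only [Finset.mem_filter, Finset.mem_univ, true_and] at hqm
      obtain ⟨w, hw⟩ := qf_param B halt hnd hq0 hqm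
      exact ⟨w, Finset.mem_univ w, by funext x; exact (hw x).symm⟩
    · intro w _; rfl
  rw [stepB]
  -- Step C : evaluate the sum over V
  have hEps : ∀ w : V, (if IsEvenQF (fun x => q0 x + B w x) then (1 : ℤ) else -1) =
      e0 * zmod2Sign (q0 w) := by
    intro w
    have h1 := Wsum_eq_sign B (quad_translate B hq0 w) halt hnd hdim
    have h2 := Wsum_translate B hq0 halt w
    have h3 := Wsum_eq_sign B hq0 halt hnd hdim
    have key : (if IsEvenQF (fun x => q0 x + B w x) then (1 : ℤ) else -1) * 2 ^ g =
        (e0 * zmod2Sign (q0 w)) * 2 ^ g := by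
      rw [← h1, h2, h3, ← he0]
      ring
    exact mul_right_cancel₀ h2g key
  have hterm : ∀ w : V, F (fun x => q0 x + B w x) =
      (e0 * zmod2Sign (q0 v)) * zmod2Sign (q0 w + B v w) := by
    intro w
    rw [hF]
    dsimp only
    rw [hEps w]
    have ha : zmod2Sign (q0 v + B w v) = zmod2Sign (q0 v) * zmod2Sign (B v w) := by
      rw [zmod2Sign_add, bsymm B halt w v]
    have hb : zmod2Sign (q0 w + B v w) = zmod2Sign (q0 w) * zmod2Sign (B v w) :=
      zmod2Sign_add _ _
    rw [ha, hb]
    ring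
  rw [Finset.sum_congr rfl (fun w _ => hterm w), ← Finset.mul_sum]
  have hWv : ∑ w : V, zmod2Sign (q0 w + B v w) = zmod2Sign (q0 v) * Wsum q0 := by
    have := Wsum_translate B hq0 halt v
    unfold Wsum at this ⊢
    exact this
  rw [hWv, Wsum_eq_sign B hq0 halt hnd hdim, ← he0]
  have : e0 * zmod2Sign (q0 v) * (zmod2Sign (q0 v) * (e0 * 2 ^ g)) =
      (e0 * e0) * (zmod2Sign (q0 v) * zmod2Sign (q0 v)) * 2 ^ g := by ring
  rw [this, he0sq, hsgn (q0 v), one_mul, one_mul]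
end
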